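/- If there exists t₁ and a nonnegative C¹ function g : [t₁,∞) → [0,∞) satisfying the differential inequality -g'(x) ≥ g(x)² + f(x) for all x ≥ t₁, then f is recursively integrable. -/

import Mathlib

/-- `f` is recursively integrable on `[t₀, ∞)`: for some `t₁ ≥ t₀`, the differential
equation `-g′(x) = g(x)² + f(x)` has a nonnegative solution `g` on `[t₁, ∞)`. -/
def RecInt (t₀ : ℝ) (f : ℝ → ℝ) : Prop :=
  ∃ t₁ : ℝ, t₀ ≤ t₁ ∧ ∃ g : ℝ → ℝ, (∀ x, t₁ ≤ x → 0 ≤ g x) ∧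
    ∀ x, t₁ ≤ x → HasDerivWithinAt g (-(g x ^ 2 + f x)) (Set.Ici t₁) x

/-- Clamp to `[0, B]`. -/
noncomputable def RIclamp (B y : ℝ) : ℝ := max 0 (min y B)

lemma RIclamp_nonneg (B y : ℝ) : 0 ≤ RIclamp B y := le_max_left 0 _

lemma RIclamp_le (B y : ℝ) (hB : 0 ≤ B) : RIclamp B y ≤ B :=
  max_le hB (min_le_right _ _)

lemma RIclamp_eq (B y : ℝ) (h0 : 0 ≤ y) (hyB : y ≤ B) : RIclamp B y = y := by
  unfold RIclamp; rw [min_eq_left hyB, max_eq_right h0]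

lemma RIclamp_le_abs (B y : ℝ) (hB : 0 ≤ B) : RIclamp B y ≤ |y| := by
  unfold RIclamp
  rcases le_total 0 y with hy | hy
  · calc max 0 (min y B) ≤ max 0 y := max_le_max le_rfl (min_le_left _ _)
      _ = y := max_eq_right hy
      _ ≤ |y| := le_abs_self y
  · rw [min_eq_left (hy.trans hB), max_eq_left hy]
    exact abs_nonneg y

lemma RIclamp_sq_le (B y : ℝ) (hB : 0 ≤ B) : (RIclamp B y) ^ 2 ≤ y ^ 2 := by
  calc (RIclamp B y) ^ 2 ≤ |y| ^ 2 :=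
        pow_le_pow_left₀ (RIclamp_nonneg B y) (RIclamp_le_abs B y hB) 2
    _ = y ^ 2 := sq_abs y

lemma RIclamp_lip (B a b : ℝ) : |RIclamp B a - RIclamp B b| ≤ |a - b| := by
  unfold RIclamp
  rw [max_comm 0 (min a B), max_comm 0 (min b B)]
  calc |max (min a B) 0 - max (min b B) 0| ≤ |min a B - min b B| :=
        abs_max_sub_max_le_abs _ _ _
    _ ≤ max |a - b| |B - B| := abs_min_sub_min_le_max a B b B
    _ = |a - b| := by rw [sub_self, abs_zero]; exact max_eq_left (abs_nonneg _)

/-- The truncated Riccati vector field. -/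
noncomputable def RIfield (f : ℝ → ℝ) (t₁ B t y : ℝ) : ℝ :=
  -((RIclamp B y) ^ 2 + f (max t t₁))

lemma RIfield_lip (f : ℝ → ℝ) (t₁ B : ℝ) (hB : 0 ≤ B) (t : ℝ) :
    LipschitzWith (Real.toNNReal (2 * B)) (RIfield f t₁ B t) := by
  apply LipschitzWith.of_dist_le_mul
  intro a b
  rw [Real.dist_eq, Real.dist_eq, Real.coe_toNNReal _ (by positivity : (0:ℝ) ≤ 2 * B)]
  unfold RIfield
  have e : (-((RIclamp B a) ^ 2 + f (max t t₁))) - (-((RIclamp B b) ^ 2 + f (max t t₁)))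
      = (RIclamp B b - RIclamp B a) * (RIclamp B b + RIclamp B a) := by ring
  rw [e, abs_mul]
  have h1 : |RIclamp B b - RIclamp B a| ≤ |a - b| :=
    (RIclamp_lip B b a).trans (le_of_eq (abs_sub_comm b a))
  have h2 : |RIclamp B b + RIclamp B a| ≤ 2 * B := by
    rw [abs_of_nonneg (add_nonneg (RIclamp_nonneg B b) (RIclamp_nonneg B a))]
    have := RIclamp_le B b hB
    have := RIclamp_le B a hB
    linarith
  calc |RIclamp B b - RIclamp B a| * |RIclamp B b + RIclamp B a|
      ≤ |a - b| * (2 * B) := mul_le_mul h1 h2 (abs_nonneg _) (abs_nonneg _)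
    _ = 2 * B * |a - b| := mul_comm _ _

/-- Global existence for the truncated field on `[t₁, T]`. -/
lemma RIexists (f : ℝ → ℝ) (t₁ B T : ℝ) (hB : 0 ≤ B)
    (hfc : ContinuousOn f (Set.Ici t₁)) (hT : t₁ ≤ T) :
    ∃ h : ℝ → ℝ, h t₁ = B ∧ ∀ t ∈ Set.Icc t₁ T,
      HasDerivWithinAt h (RIfield f t₁ B t (h t)) (Set.Icc t₁ T) t := by
  have hmaxc : ContinuousOn (fun t : ℝ => f (max t t₁)) (Set.Icc t₁ T) := by
    apply hfc.comp ((continuous_id.max continuous_const).continuousOn)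
    intro x _
    exact Set.mem_Ici.mpr (le_max_right _ _)
  obtain ⟨M, hM⟩ := isCompact_Icc.exists_bound_of_continuousOn hmaxc
  have hM0 : 0 ≤ M := le_trans (norm_nonneg _) (hM t₁ (Set.left_mem_Icc.mpr hT))
  have hpl : IsPicardLindelof (RIfield f t₁ B) (⟨t₁, Set.left_mem_Icc.mpr hT⟩ : Set.Icc t₁ T) B
      (Real.toNNReal ((B ^ 2 + M) * (T - t₁))) 0 (Real.toNNReal (B ^ 2 + M))
      (Real.toNNReal (2 * B)) := by
    refine ⟨?_, ?_, ?_, ?_⟩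
    · exact fun t _ => (RIfield_lip f t₁ B hB t).lipschitzOnWith
    · intro x _
      simp only [RIfield]
      exact (continuousOn_const.add hmaxc).neg
    · intro t ht y _
      simp only [RIfield, Real.norm_eq_abs]
      rw [abs_neg, Real.coe_toNNReal _ (by positivity)]
      have h3 : |f (max t t₁)| ≤ M := by
        have := hM t ht
        rwa [Real.norm_eq_abs] at this
      calc |RIclamp B y ^ 2 + f (max t t₁)| ≤ |RIclamp B y ^ 2| + |f (max t t₁)| := abs_add_le _ _
        _ ≤ B ^ 2 + M := by
            rw [abs_of_nonneg (sq_nonneg _)]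
            have : RIclamp B y ^ 2 ≤ B ^ 2 :=
              pow_le_pow_left₀ (RIclamp_nonneg B y) (RIclamp_le B y hB) 2
            linarith
    · simp only [sub_self, max_eq_left (by linarith : (0:ℝ) ≤ T - t₁), NNReal.coe_zero, tsub_zero,
        Real.coe_toNNReal _ (by positivity : (0:ℝ) ≤ B ^ 2 + M),
        Real.coe_toNNReal _ (mul_nonneg (by positivity) (by linarith) : (0:ℝ) ≤ (B ^ 2 + M) * (T - t₁))]
      exact le_rfl
  exact IsPicardLindelof.exists_eq_forall_mem_Icc_hasDerivWithinAt₀ hpl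

/-- Uniqueness for the truncated field. -/
lemma RIuniq (f : ℝ → ℝ) (t₁ B : ℝ) (hB : 0 ≤ B) {T T' : ℝ} (hTT' : T ≤ T')
    (h h' : ℝ → ℝ) (h0 : h t₁ = B) (h0' : h' t₁ = B)
    (hd : ∀ t ∈ Set.Icc t₁ T, HasDerivWithinAt h (RIfield f t₁ B t (h t)) (Set.Icc t₁ T) t)
    (hd' : ∀ t ∈ Set.Icc t₁ T', HasDerivWithinAt h' (RIfield f t₁ B t (h' t)) (Set.Icc t₁ T') t) :
    ∀ t ∈ Set.Icc t₁ T, h t = h' t := by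
  have key : Set.EqOn h h' (Set.Icc t₁ T) := by
    apply ODE_solution_unique_of_mem_Icc_right
      (v := RIfield f t₁ B) (s := fun _ => Set.univ) (K := Real.toNNReal (2 * B))
    · exact fun t _ => (RIfield_lip f t₁ B hB t).lipschitzOnWith
    · exact fun y hy => (hd y hy).continuousWithinAt
    · intro y hy
      have hmem : Set.Icc t₁ T ∈ nhdsWithin y (Set.Ici y) := by
        refine Filter.mem_of_superset (Filter.inter_mem self_mem_nhdsWithin
          (mem_nhdsWithin_of_mem_nhds (Iic_mem_nhds hy.2))) ?_
        rintro z ⟨hz1, hz2⟩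
        exact ⟨hy.1.trans hz1, hz2⟩
      exact (hd y ⟨hy.1, hy.2.le⟩).mono_of_mem_nhdsWithin hmem
    · exact fun y _ => Set.mem_univ _
    · exact fun y hy => ((hd' y ⟨hy.1, hy.2.trans hTT'⟩).continuousWithinAt).mono
        (Set.Icc_subset_Icc le_rfl hTT')
    · intro y hy
      have hmem : Set.Icc t₁ T' ∈ nhdsWithin y (Set.Ici y) := by
        refine Filter.mem_of_superset (Filter.inter_mem self_mem_nhdsWithin
          (mem_nhdsWithin_of_mem_nhds (Iic_mem_nhds (lt_of_lt_of_le hy.2 hTT')))) ?_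
        rintro z ⟨hz1, hz2⟩
        exact ⟨hy.1.trans hz1, hz2⟩
      exact (hd' y ⟨hy.1, hy.2.le.trans hTT'⟩).mono_of_mem_nhdsWithin hmem
    · exact fun y _ => Set.mem_univ _
    · rw [h0, h0']
  exact fun t ht => key ht

/-- Comparison: a solution of the truncated equation starting at `g t₁` is trapped between
`g` and `g t₁`, hence solves the true Riccati equation. -/
lemma RIcompare (f : ℝ → ℝ) (t₁ : ℝ) (g g' : ℝ → ℝ)
    (hf0 : ∀ x, t₁ ≤ x → 0 ≤ f x)
    (hg : ∀ x, t₁ ≤ x → HasDerivWithinAt g (g' x) (Set.Ici t₁) x)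
    (hg0 : ∀ x, t₁ ≤ x → 0 ≤ g x)
    (hineq : ∀ x, t₁ ≤ x → g x ^ 2 + f x ≤ -g' x)
    {T : ℝ} (hT : t₁ ≤ T) (h : ℝ → ℝ) (h0 : h t₁ = g t₁)
    (hd : ∀ t ∈ Set.Icc t₁ T, HasDerivWithinAt h (RIfield f t₁ (g t₁) t (h t)) (Set.Icc t₁ T) t) :
    ∀ t ∈ Set.Icc t₁ T, (g t ≤ h t ∧ h t ≤ g t₁) ∧
      HasDerivWithinAt h (-(h t ^ 2 + f t)) (Set.Icc t₁ T) t := by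
  have hB : 0 ≤ g t₁ := hg0 t₁ le_rfl
  have hcont : ContinuousOn h (Set.Icc t₁ T) := fun t ht => (hd t ht).continuousWithinAt
  have hgc : ContinuousOn g (Set.Icc t₁ T) := fun t ht =>
    ((hg t ht.1).continuousWithinAt).mono Set.Icc_subset_Ici_self
  -- h is antitone, hence bounded above by its initial value
  have hmono : AntitoneOn h (Set.Icc t₁ T) := by
    apply antitoneOn_of_deriv_nonpos (convex_Icc t₁ T) hcont
    · intro x hx
      rw [interior_Icc] at hx
      exact ((hd x (Set.Ioo_subset_Icc_self hx)).hasDerivAt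
        (Icc_mem_nhds hx.1 hx.2)).differentiableAt.differentiableWithinAt
    · intro x hx
      rw [interior_Icc] at hx
      rw [((hd x (Set.Ioo_subset_Icc_self hx)).hasDerivAt (Icc_mem_nhds hx.1 hx.2)).deriv]
      simp only [RIfield]
      have hfx : 0 ≤ f (max x t₁) := hf0 _ (le_max_right _ _)
      have := sq_nonneg (RIclamp (g t₁) (h x))
      linarith
  have hleB : ∀ t ∈ Set.Icc t₁ T, h t ≤ g t₁ := by
    intro t ht
    have := hmono (Set.left_mem_Icc.mpr hT) ht ht.1
    rwa [h0] at this
  -- the integrating factor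
  have hclamp : ∀ s : ℝ, max t₁ (min s T) ∈ Set.Icc t₁ T := fun s =>
    ⟨le_max_left _ _, max_le hT (min_le_right _ _)⟩
  have hψc : Continuous (fun s : ℝ => g (max t₁ (min s T)) + h (max t₁ (min s T))) :=
    (hgc.add hcont).comp_continuous
      (continuous_const.max (continuous_id.min continuous_const)) hclamp
  set ψ : ℝ → ℝ := fun s => g (max t₁ (min s T)) + h (max t₁ (min s T)) with hψdef
  set A : ℝ → ℝ := fun x => ∫ s in t₁..x, ψ s with hAdef
  have hA : ∀ x : ℝ, HasDerivAt A (ψ x) x := fun x =>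
    intervalIntegral.integral_hasDerivAt_right (hψc.intervalIntegrable _ _)
      (hψc.stronglyMeasurableAtFilter _ _) hψc.continuousAt
  have hψeq : ∀ x ∈ Set.Icc t₁ T, ψ x = g x + h x := by
    intro x hx
    simp only [hψdef]
    rw [min_eq_left hx.2, max_eq_right hx.1]
  set φ : ℝ → ℝ := fun x => (g x - h x) * Real.exp (A x) with hφdef
  have hφd : ∀ x ∈ Set.Icc t₁ T, HasDerivWithinAt φ
      ((g' x - RIfield f t₁ (g t₁) x (h x)) * Real.exp (A x)
        + (g x - h x) * (Real.exp (A x) * (g x + h x))) (Set.Icc t₁ T) x := by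
    intro x hx
    have h1 : HasDerivWithinAt (fun y => g y - h y)
        (g' x - RIfield f t₁ (g t₁) x (h x)) (Set.Icc t₁ T) x :=
      ((hg x hx.1).mono Set.Icc_subset_Ici_self).sub (hd x hx)
    have h2 : HasDerivAt (fun y => Real.exp (A y)) (Real.exp (A x) * ψ x) x := (hA x).exp
    rw [hψeq x hx] at h2
    exact h1.mul h2.hasDerivWithinAt
  have hkey : ∀ x ∈ Set.Icc t₁ T,
      (g' x - RIfield f t₁ (g t₁) x (h x)) * Real.exp (A x)
        + (g x - h x) * (Real.exp (A x) * (g x + h x)) ≤ 0 := by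
    intro x hx
    have hfx : RIfield f t₁ (g t₁) x (h x) = -((RIclamp (g t₁) (h x)) ^ 2 + f x) := by
      simp only [RIfield]
      rw [max_eq_left hx.1]
    rw [hfx]
    have e1 : g' x ≤ -(g x ^ 2 + f x) := by
      have := hineq x hx.1; linarith
    have e2 : (RIclamp (g t₁) (h x)) ^ 2 ≤ (h x) ^ 2 := RIclamp_sq_le _ _ hB
    have e3 : (0:ℝ) < Real.exp (A x) := Real.exp_pos _
    have hbr : (g' x - -((RIclamp (g t₁) (h x)) ^ 2 + f x)) + (g x - h x) * (g x + h x) ≤ 0 := by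
      nlinarith
    calc (g' x - -((RIclamp (g t₁) (h x)) ^ 2 + f x)) * Real.exp (A x)
          + (g x - h x) * (Real.exp (A x) * (g x + h x))
        = ((g' x - -((RIclamp (g t₁) (h x)) ^ 2 + f x)) + (g x - h x) * (g x + h x))
            * Real.exp (A x) := by ring
      _ ≤ 0 := mul_nonpos_iff.mpr (Or.inr ⟨hbr, e3.le⟩)
  have hφmono : AntitoneOn φ (Set.Icc t₁ T) := by
    apply antitoneOn_of_deriv_nonpos (convex_Icc t₁ T)
      (fun x hx => (hφd x hx).continuousWithinAt)
    · intro x hx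
      rw [interior_Icc] at hx
      exact ((hφd x (Set.Ioo_subset_Icc_self hx)).hasDerivAt
        (Icc_mem_nhds hx.1 hx.2)).differentiableAt.differentiableWithinAt
    · intro x hx
      rw [interior_Icc] at hx
      rw [((hφd x (Set.Ioo_subset_Icc_self hx)).hasDerivAt (Icc_mem_nhds hx.1 hx.2)).deriv]
      exact hkey x (Set.Ioo_subset_Icc_self hx)
  have hge : ∀ t ∈ Set.Icc t₁ T, g t ≤ h t := by
    intro t ht
    have h1 : φ t ≤ φ t₁ := hφmono (Set.left_mem_Icc.mpr hT) ht ht.1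
    have h2 : φ t₁ = 0 := by
      simp only [hφdef]
      rw [h0, sub_self, zero_mul]
    rw [h2] at h1
    have e3 : (0:ℝ) < Real.exp (A t) := Real.exp_pos _
    rcases mul_nonpos_iff.mp h1 with ⟨hc1, hc2⟩ | ⟨hc1, hc2⟩
    · linarith
    · linarith
  intro t ht
  have hht0 : 0 ≤ h t := le_trans (hg0 t ht.1) (hge t ht)
  have hhtB : h t ≤ g t₁ := hleB t ht
  refine ⟨⟨hge t ht, hhtB⟩, ?_⟩
  have hfx : RIfield f t₁ (g t₁) t (h t) = -(h t ^ 2 + f t) := by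
    simp only [RIfield]
    rw [max_eq_left ht.1, RIclamp_eq _ _ hht0 hhtB]
  rw [← hfx]
  exact hd t ht

/-- The differential inequality criterion: a nonnegative `C¹` solution of
`-g′(x) ≥ g(x)² + f(x)` on a tail interval implies recursive integrability of `f`. -/
theorem recInt_of_differential_inequality (t₀ : ℝ) (f : ℝ → ℝ)
    (hfc : ContinuousOn f (Set.Ici t₀)) (hf0 : ∀ x, t₀ ≤ x → 0 ≤ f x)
    (t₁ : ℝ) (ht₁ : t₀ ≤ t₁) (g g' : ℝ → ℝ)
    (hg : ∀ x, t₁ ≤ x → HasDerivWithinAt g (g' x) (Set.Ici t₁) x)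
    (hg'c : ContinuousOn g' (Set.Ici t₁))
    (hg0 : ∀ x, t₁ ≤ x → 0 ≤ g x)
    (hineq : ∀ x, t₁ ≤ x → g x ^ 2 + f x ≤ -g' x) :
    RecInt t₀ f := by
  have hB : 0 ≤ g t₁ := hg0 t₁ le_rfl
  have hf0' : ∀ x, t₁ ≤ x → 0 ≤ f x := fun x hx => hf0 x (ht₁.trans hx)
  have hfc1 : ContinuousOn f (Set.Ici t₁) := hfc.mono (Set.Ici_subset_Ici.mpr ht₁)
  have sol : ∀ T, t₁ ≤ T → ∃ h : ℝ → ℝ, h t₁ = g t₁ ∧ ∀ t ∈ Set.Icc t₁ T,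
      HasDerivWithinAt h (RIfield f t₁ (g t₁) t (h t)) (Set.Icc t₁ T) t :=
    fun T hT => RIexists f t₁ (g t₁) T hB hfc1 hT
  have hx1 : ∀ x : ℝ, t₁ ≤ x → t₁ ≤ x + 1 := fun x hx => hx.trans (by linarith)
  set G : ℝ → ℝ :=
    fun x => if hx : t₁ ≤ x then Classical.choose (sol (x + 1) (hx1 x hx)) x else 0 with hGdef
  have agree : ∀ x, ∀ hx : t₁ ≤ x, ∀ y ∈ Set.Icc t₁ (x + 1),
      G y = Classical.choose (sol (x + 1) (hx1 x hx)) y := by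
    intro x hx y hy
    have hy1 : t₁ ≤ y := hy.1
    have hGy : G y = Classical.choose (sol (y + 1) (hx1 y hy1)) y := by
      simp only [hGdef]
      rw [dif_pos hy1]
    rw [hGy]
    obtain ⟨hy0, hyd⟩ := Classical.choose_spec (sol (y + 1) (hx1 y hy1))
    obtain ⟨hx0, hxd⟩ := Classical.choose_spec (sol (x + 1) (hx1 x hx))
    rcases le_total (y + 1) (x + 1) with hc | hc
    · exact RIuniq f t₁ (g t₁) hB hc _ _ hy0 hx0 hyd hxd y
        (Set.mem_Icc.mpr ⟨hy1, by linarith⟩)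
    · exact (RIuniq f t₁ (g t₁) hB hc _ _ hx0 hy0 hxd hyd y
        (Set.mem_Icc.mpr ⟨hy1, hy.2⟩)).symm
  refine ⟨t₁, ht₁, G, ?_, ?_⟩
  · intro x hx
    obtain ⟨hx0, hxd⟩ := Classical.choose_spec (sol (x + 1) (hx1 x hx))
    have hGx : G x = Classical.choose (sol (x + 1) (hx1 x hx)) x :=
      agree x hx x (Set.mem_Icc.mpr ⟨hx, by linarith⟩)
    rw [hGx]
    have := (RIcompare f t₁ g g' hf0' hg hg0 hineq (hx1 x hx) _ hx0 hxd x
      (Set.mem_Icc.mpr ⟨hx, by linarith⟩)).1.1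
    exact le_trans (hg0 x hx) this
  · intro x hx
    obtain ⟨hx0, hxd⟩ := Classical.choose_spec (sol (x + 1) (hx1 x hx))
    have hD := (RIcompare f t₁ g g' hf0' hg hg0 hineq (hx1 x hx) _ hx0 hxd x
      (Set.mem_Icc.mpr ⟨hx, by linarith⟩)).2
    have hmem : Set.Icc t₁ (x + 1) ∈ nhdsWithin x (Set.Ici t₁) := by
      refine Filter.mem_of_superset (Filter.inter_mem self_mem_nhdsWithin
        (mem_nhdsWithin_of_mem_nhds (Iic_mem_nhds (by linarith : x < x + 1)))) ?_
      rintro z ⟨hz1, hz2⟩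
      exact ⟨hz1, hz2⟩
    have hD2 : HasDerivWithinAt (Classical.choose (sol (x + 1) (hx1 x hx)))
        (-((Classical.choose (sol (x + 1) (hx1 x hx)) x) ^ 2 + f x)) (Set.Ici t₁) x :=
      hD.mono_of_mem_nhdsWithin hmem
    have hEq : G =ᶠ[nhdsWithin x (Set.Ici t₁)] Classical.choose (sol (x + 1) (hx1 x hx)) :=
      Filter.eventuallyEq_of_mem hmem (fun y hy => agree x hx y hy)
    have hGx : G x = Classical.choose (sol (x + 1) (hx1 x hx)) x :=
      agree x hx x (Set.mem_Icc.mpr ⟨hx, by linarith⟩)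
    rw [hGx]
    exact hD2.congr_of_eventuallyEq hEq hGx
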